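/- For every a ∈ F^×, the function z_ℓ(a) : F → R is continuous with compact support (its support is contained in 𝒪 ∪ a𝒪). Moreover, a ↦ z_ℓ(a) is a 1-cocycle for the action (a·g)(x) = g(a⁻¹x) of F^× on the space of continuous compactly supported R-valued functions on F: for all a, b ∈ F^× and all x ∈ F, z_ℓ(ab)(x) = z_ℓ(a)(x) + z_ℓ(b)(a⁻¹x). -/

import Mathlib

open scoped Classical
open Filter
open scoped Topology

variable {F R : Type*}

/-- The cocycle `z_ℓ(a) : F → R`, given for `x ≠ 0` by
`z_ℓ(a)(x) = ℓ(x)(1_𝒪(x) − 1_{a𝒪}(x)) + ℓ(a)·1_{a𝒪}(x)` and by `z_ℓ(a)(0) = ℓ(a)`;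
here `𝒪 = {x | ord x ≥ 0}` and `a𝒪 = {x | ord x ≥ ord a}` (with `ord 0 = ⊤`). -/
noncomputable def zEll [Field F] [Ring R]
    (ord : F → WithTop ℤ) (ℓ : F → R) (a x : F) : R :=
  if x = 0 then ℓ a
  else
    ℓ x * ((if (0 : WithTop ℤ) ≤ ord x then 1 else 0) - (if ord a ≤ ord x then 1 else 0)) +
      ℓ a * (if ord a ≤ ord x then 1 else 0)

/-- Arithmetic helper for `WithTop ℤ`. -/
lemma withTopKey (k l : ℤ) (t : WithTop ℤ) :
    ((l : ℤ) : WithTop ℤ) ≤ ((-k : ℤ) : WithTop ℤ) + t ↔ ((k + l : ℤ) : WithTop ℤ) ≤ t := by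
  induction t using WithTop.recTopCoe with
  | top => simp
  | coe m =>
    rw [← WithTop.coe_add, WithTop.coe_le_coe, WithTop.coe_le_coe]
    omega

theorem stmt10 [Field F] [TopologicalSpace F] [IsTopologicalRing F]
    [CommRing R] [TopologicalSpace R] [T2Space R] [IsTopologicalRing R]
    (ord : F → WithTop ℤ)
    (hord0 : ∀ x : F, ord x = ⊤ ↔ x = 0)
    (hordmul : ∀ x y : F, ord (x * y) = ord x + ord y)
    (ϖ : F) (hϖ : ord ϖ = (1 : ℤ))
    (hbasis : (nhds (0 : F)).HasBasis (fun _ : ℕ => True)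
      (fun n => {x : F | ((n : ℤ) : WithTop ℤ) ≤ ord x}))
    (hcomp : IsCompact {x : F | (0 : WithTop ℤ) ≤ ord x})
    (ℓ : F → R)
    (hℓ : ∀ x y : F, x ≠ 0 → y ≠ 0 → ℓ (x * y) = ℓ x + ℓ y)
    (hℓcont : ContinuousOn ℓ {x : F | x ≠ 0}) :
    (∀ a : F, a ≠ 0 →
      Continuous (zEll ord ℓ a) ∧ HasCompactSupport (zEll ord ℓ a) ∧
      Function.support (zEll ord ℓ a) ⊆
        {x : F | (0 : WithTop ℤ) ≤ ord x} ∪ {x : F | ord a ≤ ord x}) ∧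
    (∀ a b : F, a ≠ 0 → b ≠ 0 → ∀ x : F,
      zEll ord ℓ (a * b) x = zEll ord ℓ a x + zEll ord ℓ b (a⁻¹ * x)) := by
  -- basic facts about ord
  have h00 : ord (0 : F) = ⊤ := (hord0 0).2 rfl
  have hfin : ∀ x : F, x ≠ 0 → ∃ k : ℤ, ord x = (k : WithTop ℤ) := by
    intro x hx
    obtain ⟨k, hk⟩ := WithTop.ne_top_iff_exists.mp (fun h => hx ((hord0 x).1 h))
    exact ⟨k, hk.symm⟩
  have hord1 : ord (1 : F) = ((0 : ℤ) : WithTop ℤ) := by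
    obtain ⟨k, hk⟩ := hfin 1 one_ne_zero
    have := hordmul 1 1
    rw [one_mul, hk, ← WithTop.coe_add, WithTop.coe_inj] at this
    rw [hk, WithTop.coe_inj]
    omega
  have hordinv : ∀ a : F, a ≠ 0 → ∀ k : ℤ, ord a = (k : WithTop ℤ) →
      ord a⁻¹ = ((-k : ℤ) : WithTop ℤ) := by
    intro a ha k hk
    obtain ⟨j, hj⟩ := hfin a⁻¹ (inv_ne_zero ha)
    have := hordmul a a⁻¹
    rw [mul_inv_cancel₀ ha, hord1, hk, hj, ← WithTop.coe_add, WithTop.coe_inj] at this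
    rw [hj, WithTop.coe_inj]
    omega
  have hl1 : ℓ (1 : F) = 0 := by
    have h := hℓ 1 1 one_ne_zero one_ne_zero
    rw [one_mul] at h
    have : ℓ (1:F) + 0 = ℓ 1 + ℓ 1 := by rw [add_zero]; exact h
    exact (add_left_cancel this).symm
  have hlinv : ∀ a : F, a ≠ 0 → ℓ a⁻¹ = - ℓ a := by
    intro a ha
    have h := hℓ a a⁻¹ ha (inv_ne_zero ha)
    rw [mul_inv_cancel₀ ha, hl1] at h
    exact eq_neg_of_add_eq_zero_right h.symm
  -- T2
  have hT2 : T2Space F := by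
    apply IsTopologicalAddGroup.t2Space_of_zero_sep
    intro x hx
    obtain ⟨k, hk⟩ := hfin x hx
    refine ⟨{y : F | ((((k + 1).toNat : ℤ) : ℤ) : WithTop ℤ) ≤ ord y},
      hbasis.mem_of_mem trivial, ?_⟩
    simp only [Set.mem_setOf_eq, hk, WithTop.coe_le_coe, not_le]
    omega
  haveI := hT2
  -- the set {x | ord a ≤ ord x} is the preimage of 𝒪 under multiplication by a⁻¹
  have hpre : ∀ a : F, a ≠ 0 → {x : F | ord a ≤ ord x}
      = (fun y => a⁻¹ * y) ⁻¹' {z : F | (0 : WithTop ℤ) ≤ ord z} := by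
    intro a ha
    obtain ⟨k, hk⟩ := hfin a ha
    ext x
    simp only [Set.mem_setOf_eq, Set.mem_preimage, hordmul, hordinv a ha k hk, hk]
    rw [← WithTop.coe_zero, withTopKey k 0 (ord x), add_zero]
  -- {x | ord a ≤ ord x} is compact
  have himage : ∀ a : F, a ≠ 0 → {x : F | ord a ≤ ord x}
      = (fun y => a * y) '' {x : F | (0 : WithTop ℤ) ≤ ord x} := by
    intro a ha
    rw [hpre a ha]
    ext x
    simp only [Set.mem_preimage, Set.mem_image, Set.mem_setOf_eq]
    constructor
    · intro h
      exact ⟨a⁻¹ * x, h, by field_simp⟩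
    · rintro ⟨y, hy, rfl⟩
      rwa [inv_mul_cancel_left₀ ha]
  have hcompA : ∀ a : F, a ≠ 0 → IsCompact {x : F | ord a ≤ ord x} := by
    intro a ha
    rw [himage a ha]
    exact hcomp.image (continuous_mul_left a)
  have hϖ0 : ϖ ≠ 0 := by
    intro h
    rw [h, h00] at hϖ
    exact (WithTop.coe_ne_top (a := (1:ℤ))) hϖ.symm
  -- 𝒪 is a neighborhood of 1
  have hO1 : {x : F | (0 : WithTop ℤ) ≤ ord x} ∈ 𝓝 (1 : F) := by
    by_contra hno
    have htr : Tendsto (fun u : F => 1 + u) (𝓝 0) (𝓝 (1 : F)) := by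
      have h := (continuous_const.add continuous_id :
        Continuous fun u : F => (1 : F) + u).tendsto (0 : F)
      simpa [Pi.add_def] using h
    have hsel : ∀ n : ℕ, ∃ u : F, ((n : ℤ) : WithTop ℤ) ≤ ord u ∧
        ¬ (0 : WithTop ℤ) ≤ ord (1 + u) := by
      intro n
      by_contra hc
      push_neg at hc
      apply hno
      have hmem : {x : F | ((n : ℤ) : WithTop ℤ) ≤ ord x} ∈ 𝓝 (0 : F) :=
        hbasis.mem_of_mem trivial
      have : (fun u : F => 1 + u) ⁻¹' {x : F | (0 : WithTop ℤ) ≤ ord x} ∈ 𝓝 (0 : F) :=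
        Filter.mem_of_superset hmem (fun u hu => hc u hu)
      have heq : Filter.map (fun u : F => 1 + u) (𝓝 (0 : F)) = 𝓝 (1 : F) := by
        simpa using (Homeomorph.addLeft (1 : F)).map_nhds_eq (0 : F)
      rw [← heq, Filter.mem_map]
      exact this
    choose u hu1 hu2 using hsel
    have hu0 : Tendsto u atTop (𝓝 (0 : F)) := by
      rw [hbasis.tendsto_right_iff]
      intro n _
      filter_upwards [eventually_ge_atTop n] with m hm
      exact le_trans (WithTop.coe_le_coe.2 (by exact_mod_cast hm)) (hu1 m)
    have hne : ∀ m : ℕ, (1 : F) + u m ≠ 0 := by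
      intro m h
      apply hu2 m
      rw [h, h00]
      exact le_top
    set v : ℕ → F := fun m => ((1 : F) + u m)⁻¹ with hv
    have hvU1 : ∀ m, v m ∈ {x : F | ord ϖ ≤ ord x} := by
      intro m
      obtain ⟨j, hj⟩ := hfin (1 + u m) (hne m)
      have hneg : ¬ ((0:ℤ) ≤ j) := by
        intro h
        apply hu2 m
        rw [hj]
        exact_mod_cast WithTop.coe_le_coe.2 h
      have := hordinv _ (hne m) j hj
      simp only [Set.mem_setOf_eq, hv, this, hϖ, WithTop.coe_le_coe]
      omega
    have hmap : Filter.map v atTop ≤ Filter.principal {x : F | ord ϖ ≤ ord x} :=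
      Filter.le_principal_iff.2 (Filter.mem_map.2 (Filter.Eventually.of_forall hvU1))
    obtain ⟨w, hwU, hwcl⟩ := (hcompA ϖ hϖ0).exists_mapClusterPt hmap
    obtain ⟨Uf, hUf, hvt⟩ := mapClusterPt_iff_ultrafilter.1 hwcl
    have h1t : Tendsto (fun m => (1 : F) + u m) (Uf : Filter ℕ) (𝓝 (1 : F)) :=
      (htr.comp hu0).mono_left hUf
    have hmul : Tendsto (fun m => v m * ((1 : F) + u m)) (Uf : Filter ℕ) (𝓝 (w * 1)) :=
      hvt.mul h1t
    have hconst : ∀ m, v m * ((1 : F) + u m) = 1 := fun m => inv_mul_cancel₀ (hne m)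
    have hw1 : w = 1 := by
      have h2 : Tendsto (fun m => v m * ((1 : F) + u m)) (Uf : Filter ℕ) (𝓝 (1 : F)) := by
        simp only [hconst]
        exact tendsto_const_nhds
      have := tendsto_nhds_unique hmul h2
      rwa [mul_one] at this
    rw [hw1] at hwU
    simp only [Set.mem_setOf_eq, hϖ, hord1, WithTop.coe_le_coe] at hwU
    omega
  -- 𝒪 is open
  have hOopen : IsOpen {x : F | (0 : WithTop ℤ) ≤ ord x} := by
    rw [isOpen_iff_mem_nhds]
    intro x hx
    rcases eq_or_ne x 0 with rfl | hx0
    · refine Filter.mem_of_superset (hbasis.mem_of_mem (i := 0) trivial) ?_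
      intro y hy
      simpa using hy
    · obtain ⟨k, hk⟩ := hfin x hx0
      have hk0 : (0:ℤ) ≤ k := by
        rw [Set.mem_setOf_eq, hk, ← WithTop.coe_zero, WithTop.coe_le_coe] at hx
        exact hx
      have hc : ContinuousAt (fun y : F => x⁻¹ * y) x := (continuous_mul_left _).continuousAt
      have h1 : {z : F | (0 : WithTop ℤ) ≤ ord z} ∈ 𝓝 ((fun y : F => x⁻¹ * y) x) := by
        show _ ∈ 𝓝 (x⁻¹ * x)
        rw [inv_mul_cancel₀ hx0]
        exact hO1
      refine Filter.mem_of_superset (hc.preimage_mem_nhds h1) ?_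
      intro y hy
      simp only [Set.mem_preimage, Set.mem_setOf_eq, hordmul, hordinv x hx0 k hk] at hy
      rw [← WithTop.coe_zero, withTopKey k 0 (ord y), add_zero] at hy
      rw [Set.mem_setOf_eq, ← WithTop.coe_zero]
      exact le_trans (WithTop.coe_le_coe.2 hk0) hy
  have hSopen : ∀ a : F, a ≠ 0 → IsOpen {x : F | ord a ≤ ord x} := by
    intro a ha
    rw [hpre a ha]
    exact hOopen.preimage (continuous_mul_left a⁻¹)
  constructor
  · -- continuity, compact support, support containment
    intro a ha
    obtain ⟨ka, hka⟩ := hfin a ha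
    have hsupp : Function.support (zEll ord ℓ a) ⊆
        {x : F | (0 : WithTop ℤ) ≤ ord x} ∪ {x : F | ord a ≤ ord x} := by
      intro x hx
      by_contra hmem
      apply hx
      simp only [Set.mem_union, Set.mem_setOf_eq, not_or] at hmem
      obtain ⟨h1, h2⟩ := hmem
      have hx0 : x ≠ 0 := by
        intro h
        apply h1
        rw [h, h00]
        exact le_top
      simp only [zEll, if_neg hx0, if_neg h1, if_neg h2]
      ring
    have hcont : Continuous (zEll ord ℓ a) := by
      rw [continuous_iff_continuousAt]
      intro x
      rcases eq_or_ne x 0 with rfl | hx0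
      · -- at 0 : locally constant equal to ℓ a
        rw [continuousAt_congr (g := fun _ : F => ℓ a)]
        · exact continuousAt_const
        · filter_upwards [hbasis.mem_of_mem (i := ka.toNat) trivial] with y hy
          rcases eq_or_ne y 0 with rfl | hy0
          · simp [zEll]
          · have hy' : ((ka.toNat : ℤ) : WithTop ℤ) ≤ ord y := hy
            have hO : (0 : WithTop ℤ) ≤ ord y := by
              rw [← WithTop.coe_zero]
              exact le_trans (WithTop.coe_le_coe.2 (by omega)) hy'
            have hA : ord a ≤ ord y := by
              rw [hka]
              exact le_trans (WithTop.coe_le_coe.2 (by omega)) hy'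
            simp only [zEll, if_neg hy0, if_pos hO, if_pos hA]
            ring
      · -- at x ≠ 0 : locally agrees with a continuous function
        obtain ⟨k, hk⟩ := hfin x hx0
        have hϖx : ϖ * x ≠ 0 := mul_ne_zero hϖ0 hx0
        have hϖxord : ord (ϖ * x) = ((1 + k : ℤ) : WithTop ℤ) := by
          rw [hordmul, hϖ, hk, ← WithTop.coe_add]
        set V : Set F := {y : F | ord x ≤ ord y} ∩ {y : F | ord (ϖ * x) ≤ ord y}ᶜ with hV
        have hVopen : IsOpen V :=
          (hSopen x hx0).inter (((hcompA _ hϖx).isClosed).isOpen_compl)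
        have hxV : x ∈ V := by
          refine ⟨?_, ?_⟩
          · show ord x ≤ ord x
            exact le_rfl
          · simp only [Set.mem_compl_iff, Set.mem_setOf_eq, hϖxord, hk, WithTop.coe_le_coe]
            omega
        have hordV : ∀ y ∈ V, ord y = ord x := by
          rintro y ⟨hy1, hy2⟩
          simp only [Set.mem_compl_iff, Set.mem_setOf_eq, hϖxord] at hy2
          simp only [Set.mem_setOf_eq, hk] at hy1
          have hy0 : y ≠ 0 := by
            intro h
            apply hy2
            rw [h, h00]
            exact le_top
          obtain ⟨m, hm⟩ := hfin y hy0
          rw [hm, WithTop.coe_le_coe] at hy1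
          rw [hm, WithTop.coe_le_coe] at hy2
          rw [hm, hk, WithTop.coe_inj]
          omega
        have hℓx : ContinuousAt ℓ x := hℓcont.continuousAt (isOpen_ne.mem_nhds hx0)
        have hgc : ContinuousAt (fun y : F => ℓ y *
            ((if (0 : WithTop ℤ) ≤ ord x then (1:R) else 0) -
              (if ord a ≤ ord x then (1:R) else 0)) +
            ℓ a * (if ord a ≤ ord x then (1:R) else 0)) x :=
          (hℓx.mul continuousAt_const).add continuousAt_const
        rw [continuousAt_congr (g := fun y : F => ℓ y *
            ((if (0 : WithTop ℤ) ≤ ord x then (1:R) else 0) -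
              (if ord a ≤ ord x then (1:R) else 0)) +
            ℓ a * (if ord a ≤ ord x then (1:R) else 0))]
        · exact hgc
        · filter_upwards [hVopen.mem_nhds hxV] with y hy
          have hyx := hordV y hy
          have hy0 : y ≠ 0 := by
            intro h
            rw [h, h00, hk] at hyx
            exact (WithTop.coe_ne_top (a := k)) hyx.symm
          simp only [zEll, if_neg hy0, hyx]
    refine ⟨hcont, ?_, hsupp⟩
    apply HasCompactSupport.intro (hcomp.union (hcompA a ha))
    intro x hx
    by_contra h
    exact hx (hsupp h)
  · -- the cocycle identity
    intro a b ha hb x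
    obtain ⟨ka, hka⟩ := hfin a ha
    obtain ⟨kb, hkb⟩ := hfin b hb
    have hab : a * b ≠ 0 := mul_ne_zero ha hb
    rcases eq_or_ne x 0 with rfl | hx
    · simp only [mul_zero, zEll, if_pos rfl]
      exact hℓ a b ha hb
    · have hax : a⁻¹ * x ≠ 0 := mul_ne_zero (inv_ne_zero ha) hx
      obtain ⟨kx, hkx⟩ := hfin x hx
      have e1 : ord (a * b) = ((ka + kb : ℤ) : WithTop ℤ) := by
        rw [hordmul, hka, hkb, ← WithTop.coe_add]
      have e2 : ord (a⁻¹ * x) = ((kx - ka : ℤ) : WithTop ℤ) := by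
        rw [hordmul, hordinv a ha ka hka, hkx, ← WithTop.coe_add]
        congr 1
        omega
      have hlx : ℓ (a⁻¹ * x) = ℓ x - ℓ a := by
        rw [hℓ a⁻¹ x (inv_ne_zero ha) hx, hlinv a ha]
        ring
      have i1 : (if (0 : WithTop ℤ) ≤ ord (a⁻¹ * x) then (1:R) else 0)
          = (if ord a ≤ ord x then (1:R) else 0) := by
        rw [e2, hka, hkx, ← WithTop.coe_zero]
        by_cases h : ka ≤ kx
        · rw [if_pos (WithTop.coe_le_coe.2 (by omega)), if_pos (WithTop.coe_le_coe.2 h)]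
        · rw [if_neg (fun hc => h (by have := WithTop.coe_le_coe.1 hc; omega)),
            if_neg (fun hc => h (WithTop.coe_le_coe.1 hc))]
      have i2 : (if ord b ≤ ord (a⁻¹ * x) then (1:R) else 0)
          = (if ord (a * b) ≤ ord x then (1:R) else 0) := by
        rw [e2, e1, hkb, hkx]
        by_cases h : kb ≤ kx - ka
        · rw [if_pos (WithTop.coe_le_coe.2 h), if_pos (WithTop.coe_le_coe.2 (by omega))]
        · rw [if_neg (fun hc => h (WithTop.coe_le_coe.1 hc)),
            if_neg (fun hc => h (by have := WithTop.coe_le_coe.1 hc; omega))]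
      simp only [zEll, if_neg hx, if_neg hax]
      rw [i1, i2, hℓ a b ha hb, hlx]
      ring
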